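/- Let ε_∞ > 0, ε_d > 0, ε_s = ε_∞ + ε_d, γ̂ = 0, and ν > 0. Define ε(ω̂) = ε_∞(1 − (ε_d/ε_∞)/(ω̂² − 1)) and δ(ω̂) = ε_d ω̂²/(ω̂² − 1)². Then for every ω̂ ≥ 0 with ω̂ ∉ {1, √(ε_s/ε_∞)}, |δ(ω̂)/ε(ω̂) + 1 + ε(ω̂)/(2ε_∞ν²)| ≥ |δ(ω̂)/ε(ω̂) + 1|. -/

import Mathlib

open Real

lemma abs_le_abs_add_of_mul_nonneg (a c : ℝ) (h : 0 ≤ a * c) : |a| ≤ |a + c| := by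
  rcases abs_cases a with ⟨h1, h2⟩ | ⟨h1, h2⟩ <;>
    rcases abs_cases (a + c) with ⟨g1, g2⟩ | ⟨g1, g2⟩ <;> nlinarith

/-- For the lossless Lorentz model, the leading dispersion-error coefficient of
the `(2,2)` trapezoidal FDTD scheme dominates that of the high order `(2,2M)`
(`M ≥ 2`) schemes: `|δ/ε + 1 + ε/(2ε_∞ν²)| ≥ |δ/ε + 1|` for all admissible `ω̂`. -/
theorem lorentz_trapezoidal_high_order_better
    (εinf εd ν : ℝ) (hεinf : 0 < εinf) (hεd : 0 < εd) (hν : 0 < ν)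
    (εs : ℝ) (hεs : εs = εinf + εd)
    (ω : ℝ) (hω0 : 0 ≤ ω) (hω1 : ω ≠ 1) (hω2 : ω ≠ Real.sqrt (εs / εinf)) :
    |(εd * ω ^ 2 / (ω ^ 2 - 1) ^ 2) /
          (εinf * (1 - (εd / εinf) / (ω ^ 2 - 1))) + 1 +
        (εinf * (1 - (εd / εinf) / (ω ^ 2 - 1))) / (2 * εinf * ν ^ 2)| ≥
      |(εd * ω ^ 2 / (ω ^ 2 - 1) ^ 2) /
          (εinf * (1 - (εd / εinf) / (ω ^ 2 - 1))) + 1| := by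
  subst hεs
  have hD1 : ω ^ 2 - 1 ≠ 0 := by
    intro h
    have : ω ^ 2 = 1 := by linarith
    have : ω = 1 := by nlinarith
    exact hω1 this
  have hD2 : εinf * ω ^ 2 - (εinf + εd) ≠ 0 := by
    intro h
    have hq : 0 ≤ (εinf + εd) / εinf := by positivity
    have hsq : ω ^ 2 = (εinf + εd) / εinf := by
      field_simp
      linarith
    apply hω2
    rw [← hsq, Real.sqrt_sq hω0]
  have hεeq : εinf * (1 - (εd / εinf) / (ω ^ 2 - 1)) =
      (εinf * ω ^ 2 - (εinf + εd)) / (ω ^ 2 - 1) := by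
    field_simp
    ring
  rw [hεeq]
  set a := (εd * ω ^ 2 / (ω ^ 2 - 1) ^ 2) /
      ((εinf * ω ^ 2 - (εinf + εd)) / (ω ^ 2 - 1)) + 1 with ha
  set c := ((εinf * ω ^ 2 - (εinf + εd)) / (ω ^ 2 - 1)) / (2 * εinf * ν ^ 2) with hc
  have hac : a * c = (εinf * (ω ^ 2 - 1) ^ 2 + εd) / (2 * εinf * ν ^ 2 * (ω ^ 2 - 1) ^ 2) := by
    rw [ha, hc]
    have hD2' : ω ^ 2 * εinf - (εinf + εd) ≠ 0 := by intro h; apply hD2; linarith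
    field_simp
    ring
  have hpos : 0 ≤ a * c := by
    rw [hac]; positivity
  exact abs_le_abs_add_of_mul_nonneg a c hpos
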